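/- An ALC TBox T is satisfiable if and only if T ∪ {A ⊑ ∀r.B} (with A, B, r fresh symbols not occurring in T) is not invariant under global EL-equisimulation; i.e., T is satisfiable iff there exist models I₁, I₂ with I₁ ∼ᵍ_EL I₂ such that I₁ is a model of T ∪ {A ⊑ ∀r.B} and I₂ is not. -/
import Mathlib


structure Interp (A R : Type) where
  Dom : Type
  atom : A → Dom → Prop
  rel : R → Dom → Dom → Prop

inductive ALC (A R : Type) where
  | atom : A → ALC A R
  | neg : ALC A R → ALC A R
  | conj : ALC A R → ALC A R → ALC A R
  | ex : R → ALC A R → ALC A R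

def ALC.sat {A R : Type} (I : Interp A R) : ALC A R → I.Dom → Prop
  | ALC.atom a, d => I.atom a d
  | ALC.neg C, d => ¬ ALC.sat I C d
  | ALC.conj C D, d => ALC.sat I C d ∧ ALC.sat I D d
  | ALC.ex r C, d => ∃ e, I.rel r d e ∧ ALC.sat I C e

def ALC.atoms {A R : Type} : ALC A R → Set A
  | ALC.atom a => {a}
  | ALC.neg C => C.atoms
  | ALC.conj C D => C.atoms ∪ D.atoms
  | ALC.ex _ C => C.atoms

def ALC.roles {A R : Type} : ALC A R → Set R
  | ALC.atom _ => ∅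
  | ALC.neg C => C.roles
  | ALC.conj C D => C.roles ∪ D.roles
  | ALC.ex r C => insert r C.roles

def SatTBox {A R : Type} (I : Interp A R) (T : Set (ALC A R × ALC A R)) : Prop :=
  ∀ p ∈ T, ∀ d : I.Dom, ALC.sat I p.1 d → ALC.sat I p.2 d

inductive EL (A R : Type) where
  | top : EL A R
  | atom : A → EL A R
  | conj : EL A R → EL A R → EL A R
  | ex : R → EL A R → EL A R

def EL.sat {A R : Type} (I : Interp A R) : EL A R → I.Dom → Prop
  | EL.top, _ => True
  | EL.atom a, d => I.atom a d
  | EL.conj C D, d => EL.sat I C d ∧ EL.sat I D d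
  | EL.ex r C, d => ∃ e, I.rel r d e ∧ EL.sat I C e

def ELSim {A R : Type} (I₁ I₂ : Interp A R) (S : I₁.Dom → I₂.Dom → Prop) : Prop :=
  (∀ d₁ d₂, S d₁ d₂ → ∀ a, I₁.atom a d₁ → I₂.atom a d₂) ∧
  (∀ d₁ d₂, S d₁ d₂ → ∀ r d₁', I₁.rel r d₁ d₁' → ∃ d₂', I₂.rel r d₂ d₂' ∧ S d₁' d₂')

def ELle {A R : Type} (I₁ : Interp A R) (d₁ : I₁.Dom) (I₂ : Interp A R)
    (d₂ : I₂.Dom) : Prop :=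
  ∃ S, ELSim I₁ I₂ S ∧ S d₁ d₂

/-- Global EL-equisimulation `I₁ ∼ᵍ_EL I₂`. -/
def GlobalELEqui {A R : Type} (I₁ I₂ : Interp A R) : Prop :=
  (∀ d₁ : I₁.Dom, ∃ d₂ : I₂.Dom, ELle I₁ d₁ I₂ d₂ ∧ ELle I₂ d₂ I₁ d₁) ∧
  (∀ d₂ : I₂.Dom, ∃ d₁ : I₁.Dom, ELle I₁ d₁ I₂ d₂ ∧ ELle I₂ d₂ I₁ d₁)

/-- `I` is a model of `T ∪ {A ⊑ ∀r.B}` where `Aa`, `Bb`, `rr` are the fresh symbols. -/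
def SatExt {A R : Type} (T : Set (ALC A R × ALC A R)) (Aa Bb : A) (rr : R)
    (I : Interp A R) : Prop :=
  SatTBox I T ∧ ∀ d e : I.Dom, I.atom Aa d → I.rel rr d e → I.atom Bb e

/-- copy interpretation on `I.Dom × Fin 3`, with fresh atom/role behaviour overridden. -/
def Jmk {A R : Type} (I : Interp A R) (Aa Bb : A) (rr : R)
    (E : (I.Dom × Fin 3) → (I.Dom × Fin 3) → Prop) : Interp A R where
  Dom := I.Dom × Fin 3
  atom a p := (a = Aa ∧ p.2 = 0) ∨ (a = Bb ∧ a ≠ Aa ∧ p.2 = 1) ∨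
    (a ≠ Aa ∧ a ≠ Bb ∧ I.atom a p.1)
  rel r p q := (r = rr ∧ E p q) ∨ (r ≠ rr ∧ I.rel r p.1 q.1 ∧ p.2 = q.2)

lemma sat_Jmk {A R : Type} (I : Interp A R) (Aa Bb : A) (rr : R)
    (E : (I.Dom × Fin 3) → (I.Dom × Fin 3) → Prop) :
    ∀ C : ALC A R, Aa ∉ C.atoms → Bb ∉ C.atoms → rr ∉ C.roles →
    ∀ p : (Jmk I Aa Bb rr E).Dom, ALC.sat (Jmk I Aa Bb rr E) C p ↔ ALC.sat I C p.1 := by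
  intro C
  induction C with
  | atom a =>
    intro ha hb _ p
    simp only [ALC.atoms, Set.mem_singleton_iff] at ha hb
    simp only [ALC.sat, Jmk]
    constructor
    · rintro (⟨h, _⟩ | ⟨h, _, _⟩ | ⟨_, _, h⟩)
      · exact absurd h.symm ha
      · exact absurd h.symm hb
      · exact h
    · intro h
      exact Or.inr (Or.inr ⟨fun h' => ha h'.symm, fun h' => hb h'.symm, h⟩)
  | neg C ih =>
    intro ha hb hr p
    simp only [ALC.atoms] at ha hb
    simp only [ALC.roles] at hr
    simp only [ALC.sat, ih ha hb hr p]
  | conj C D ihC ihD =>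
    intro ha hb hr p
    simp only [ALC.atoms, Set.mem_union, not_or] at ha hb
    simp only [ALC.roles, Set.mem_union, not_or] at hr
    simp only [ALC.sat, ihC ha.1 hb.1 hr.1 p, ihD ha.2 hb.2 hr.2 p]
  | ex r C ih =>
    intro ha hb hr p
    simp only [ALC.atoms] at ha hb
    simp only [ALC.roles, Set.mem_insert_iff, not_or] at hr
    simp only [ALC.sat]
    constructor
    · rintro ⟨e, (⟨h, _⟩ | ⟨_, hrel, _⟩), hC⟩
      · exact absurd h.symm hr.1
      · exact ⟨e.1, hrel, (ih ha hb hr.2 e).mp hC⟩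
    · rintro ⟨e, hrel, hC⟩
      exact ⟨(e, p.2), Or.inr ⟨fun h => hr.1 h.symm, hrel, rfl⟩, (ih ha hb hr.2 (e, p.2)).mpr hC⟩

theorem satisfiable_iff_not_ELequisim_invariant {A R : Type}
    (T : Set (ALC A R × ALC A R)) (hfin : T.Finite)
    (Aa Bb : A) (rr : R) (hAB : Aa ≠ Bb)
    (hA : ∀ p ∈ T, Aa ∉ p.1.atoms ∧ Aa ∉ p.2.atoms)
    (hB : ∀ p ∈ T, Bb ∉ p.1.atoms ∧ Bb ∉ p.2.atoms)
    (hr : ∀ p ∈ T, rr ∉ p.1.roles ∧ rr ∉ p.2.roles) :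
    (∃ I : Interp A R, Nonempty I.Dom ∧ SatTBox I T) ↔
    (∃ I₁ I₂ : Interp A R, GlobalELEqui I₁ I₂ ∧
      SatExt T Aa Bb rr I₁ ∧ ¬ SatExt T Aa Bb rr I₂) := by
  constructor
  · rintro ⟨I, ⟨d0⟩, hI⟩
    set E₁ : (I.Dom × Fin 3) → (I.Dom × Fin 3) → Prop :=
      fun p q => p.2 = 0 ∧ q.2 = 1 ∧ p.1 = q.1 with hE₁
    set E₂ : (I.Dom × Fin 3) → (I.Dom × Fin 3) → Prop :=
      fun p q => p.2 = 0 ∧ (q.2 = 1 ∨ q.2 = 2) ∧ p.1 = q.1 with hE₂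
    set I₁ := Jmk I Aa Bb rr E₁ with hI₁
    set I₂ := Jmk I Aa Bb rr E₂ with hI₂
    have satT : ∀ (E : (I.Dom × Fin 3) → (I.Dom × Fin 3) → Prop),
        SatTBox (Jmk I Aa Bb rr E) T := by
      intro E p hp d hsat
      rw [sat_Jmk I Aa Bb rr E p.2 (hA p hp).2 (hB p hp).2 (hr p hp).2]
      rw [sat_Jmk I Aa Bb rr E p.1 (hA p hp).1 (hB p hp).1 (hr p hp).1] at hsat
      exact hI p hp d.1 hsat
    -- simulation I₁ → I₂ : identity
    have sim12 : ELSim I₁ I₂ (fun p q => p = q) := by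
      constructor
      · rintro d₁ d₂ rfl a h; exact h
      · rintro d₁ d₂ rfl r d₁' hrel
        refine ⟨d₁', ?_, rfl⟩
        rcases hrel with ⟨h, h0, h1, heq⟩ | h
        · exact Or.inl ⟨h, h0, Or.inl h1, heq⟩
        · exact Or.inr h
    -- simulation I₂ → I₁
    have sim21 : ELSim I₂ I₁
        (fun p q => p.1 = q.1 ∧ (p.2 = q.2 ∨ (p.2 = 2 ∧ q.2 = 1))) := by
      constructor
      · rintro d₁ d₂ ⟨h1, h2⟩ a ha
        rcases ha with ⟨ha, h0⟩ | ⟨hb, hne, h0⟩ | ⟨hna, hnb, h0⟩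
        · refine Or.inl ⟨ha, ?_⟩
          rcases h2 with h2 | ⟨h2, _⟩
          · rw [← h2, h0]
          · rw [h0] at h2; exact absurd h2 (by decide)
        · refine Or.inr (Or.inl ⟨hb, hne, ?_⟩)
          rcases h2 with h2 | ⟨h2, _⟩
          · rw [← h2, h0]
          · rw [h0] at h2; exact absurd h2 (by decide)
        · exact Or.inr (Or.inr ⟨hna, hnb, h1 ▸ h0⟩)
      · rintro d₁ d₂ ⟨h1, h2⟩ r d₁' hrel
        rcases hrel with ⟨hrr, h0, hor, heq⟩ | ⟨hne, hrel, h2'⟩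
        · refine ⟨(d₂.1, 1), Or.inl ⟨hrr, ?_, rfl, rfl⟩, ?_, ?_⟩
          · rcases h2 with h2 | ⟨h2, _⟩
            · rw [← h2, h0]
            · rw [h0] at h2; exact absurd h2 (by decide)
          · rw [← heq, h1]
          · rcases hor with h | h
            · exact Or.inl h
            · exact Or.inr ⟨h, rfl⟩
        · refine ⟨(d₁'.1, d₂.2), Or.inr ⟨hne, h1 ▸ hrel, rfl⟩, rfl, ?_⟩
          rcases h2 with h2 | ⟨ha, hb⟩
          · exact Or.inl (h2' ▸ h2)
          · exact Or.inr ⟨h2' ▸ ha, hb⟩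
    refine ⟨I₁, I₂, ⟨?_, ?_⟩, ⟨satT E₁, ?_⟩, ?_⟩
    · intro p
      exact ⟨p, ⟨_, sim12, rfl⟩, ⟨_, sim21, rfl, Or.inl rfl⟩⟩
    · intro p
      exact ⟨p, ⟨_, sim12, rfl⟩, ⟨_, sim21, rfl, Or.inl rfl⟩⟩
    · -- I₁ satisfies A ⊑ ∀ rr. B
      rintro d e hAd hrel
      rcases hrel with ⟨_, _, h1, _⟩ | ⟨hne, _⟩
      · exact Or.inr (Or.inl ⟨rfl, Ne.symm hAB, h1⟩)
      · exact absurd rfl hne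
    · -- I₂ violates it
      rintro ⟨_, hax⟩
      have := hax (d0, 0) (d0, 2) (Or.inl ⟨rfl, rfl⟩)
        (Or.inl ⟨rfl, rfl, Or.inr rfl, rfl⟩)
      rcases this with ⟨h, _⟩ | ⟨_, _, h⟩ | ⟨_, h, _⟩
      · exact hAB h.symm
      · exact absurd (show (2 : Fin 3) = 1 from h) (by decide)
      · exact h rfl
  · rintro ⟨I₁, I₂, ⟨hg1, hg2⟩, hS1, hS2⟩
    have hd2 : Nonempty I₂.Dom := by
      rcases not_and_or.mp hS2 with h | h
      · unfold SatTBox at h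
        push_neg at h
        obtain ⟨p, _, d, _⟩ := h
        exact ⟨d⟩
      · push_neg at h
        obtain ⟨d, _⟩ := h
        exact ⟨d⟩
    obtain ⟨d₂⟩ := hd2
    obtain ⟨d₁, _⟩ := hg2 d₂
    exact ⟨I₁, ⟨d₁⟩, hS1.1⟩
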